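/- Let u ∈ ℝ^N satisfy ‖u‖_∞ ≤ π/2 and let Δt > 0. Then the matrix I + Δt(D^{1/2} C D^{−1/2} + G(u)D⁻²) is invertible and its operator norm with respect to the Euclidean norm on ℝ^N satisfies ‖(I + Δt(D^{1/2} C D^{−1/2} + G(u)D⁻²))^{-1}‖_2 ≤ 1. -/

import Mathlib

open Real Matrix

noncomputable section

/-- Mesh size `h = 1/(N+1)`. -/
def hmesh (N : ℕ) : ℝ := 1 / (N + 1)

/-- Grid points `x_i = i·h`, `i = 1,…,N` (here `i : Fin N` corresponds to `i+1`). -/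
def gridx (N : ℕ) (i : Fin N) : ℝ := ((i : ℕ) + 1) * hmesh N

/-- `A = (1/h²)·tridiag(−1,2,−1)`. -/
def matA (N : ℕ) : Matrix (Fin N) (Fin N) ℝ := fun i j =>
  (1 / (hmesh N) ^ 2) *
    (if (i : ℕ) = (j : ℕ) then 2
     else if (i : ℕ) + 1 = (j : ℕ) ∨ (j : ℕ) + 1 = (i : ℕ) then -1 else 0)

/-- `B = (1/(2h))·tridiag(−1,0,1)`. -/
def matB (N : ℕ) : Matrix (Fin N) (Fin N) ℝ := fun i j =>
  (1 / (2 * hmesh N)) *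
    (if (i : ℕ) + 1 = (j : ℕ) then 1
     else if (j : ℕ) + 1 = (i : ℕ) then -1 else 0)

/-- `D = diag(x_1,…,x_N)`. -/
def matD (N : ℕ) : Matrix (Fin N) (Fin N) ℝ := Matrix.diagonal (gridx N)

/-- `D^β = diag(x_1^β,…,x_N^β)` (real powers). -/
def matDpow (N : ℕ) (β : ℝ) : Matrix (Fin N) (Fin N) ℝ :=
  Matrix.diagonal (fun i => gridx N i ^ β)

/-- `C = A − D⁻¹B`. -/
def matC (N : ℕ) : Matrix (Fin N) (Fin N) ℝ :=
  matA N - Matrix.diagonal (fun i => (gridx N i)⁻¹) * matB N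

/-- `g(y) = sin(2y)/(2y)` for `y ≠ 0`, `g(0) = 1`. -/
def gfun (y : ℝ) : ℝ := if y = 0 then 1 else Real.sin (2 * y) / (2 * y)

/-- `G(u) = diag(g(u_1),…,g(u_N))`. -/
def matG {N : ℕ} (u : Fin N → ℝ) : Matrix (Fin N) (Fin N) ℝ :=
  Matrix.diagonal (fun i => gfun (u i))

/-- The matrix `I + Δt(C + G(v)D⁻²)` of the semi-implicit Euler scheme. -/
def stepMat (N : ℕ) (Δt : ℝ) (v : Fin N → ℝ) : Matrix (Fin N) (Fin N) ℝ :=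
  1 + Δt • (matC N + matG v * matDpow N (-2))

/-- Operator norm of a matrix induced by the maximum norm on `ℝ^N`
(the Pi norm on `Fin N → ℝ` is the sup norm). -/
def opNormInf {N : ℕ} (M : Matrix (Fin N) (Fin N) ℝ) : ℝ :=
  ‖(LinearMap.toContinuousLinearMap (Matrix.mulVecLin M) :
      (Fin N → ℝ) →L[ℝ] (Fin N → ℝ))‖

end

/-- Operator norm of a matrix induced by the Euclidean norm on `ℝ^N`. -/
noncomputable def opNorm2 {N : ℕ} (M : Matrix (Fin N) (Fin N) ℝ) : ℝ :=
  ‖(LinearMap.toContinuousLinearMap (Matrix.toEuclideanLin M) :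
      EuclideanSpace ℝ (Fin N) →L[ℝ] EuclideanSpace ℝ (Fin N))‖

noncomputable def tau (i j : ℕ) : ℝ :=
  (if i = j then 2*(i:ℝ)+2 else 0) +
  (if i + 1 = j then -((2*(i:ℝ)+3)/2) else 0) +
  (if j + 1 = i then -((2*(j:ℝ)+3)/2) else 0)

open Finset

lemma core (N : ℕ) (Z : ℕ → ℝ) (hZ : Z N = 0) :
    0 ≤ ∑ i ∈ range N, ∑ j ∈ range N, tau i j * Z i * Z j := by
  have aux : ∀ (f : ℕ → ℝ), f N = 0 → ∀ i ∈ range N,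
      (∑ k ∈ range N, (if i + 1 = k then f k else 0)) = f (i+1) := by
    intro f hf i hi
    rw [Finset.sum_ite_eq (range N) (i+1) f]
    by_cases h : i + 1 ∈ range N
    · simp [h]
    · have : i + 1 = N := by
        simp only [Finset.mem_range] at h hi; omega
      simp [h, this, hf]
  have key : ∑ i ∈ range N, ∑ j ∈ range N, tau i j * Z i * Z j
      = ∑ i ∈ range N, ((2*(i:ℝ)+2) * (Z i * Z i))
        - ∑ i ∈ range N, ((2*(i:ℝ)+3)/2) * (Z i * Z (i+1))
        - ∑ i ∈ range N, ((2*(i:ℝ)+3)/2) * (Z (i+1) * Z i) := by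
    have expand : ∀ i ∈ range N, ∀ j ∈ range N,
        tau i j * Z i * Z j =
          (if i = j then (2*(i:ℝ)+2) * (Z i * Z j) else 0) +
          (if i + 1 = j then -(((2*(i:ℝ)+3)/2) * (Z i * Z j)) else 0) +
          (if j + 1 = i then -(((2*(j:ℝ)+3)/2) * (Z i * Z j)) else 0) := by
      intro i _ j _
      simp only [tau, add_mul, ite_mul, zero_mul, neg_mul]
      ring
    rw [Finset.sum_congr rfl (fun i hi => Finset.sum_congr rfl (fun j hj => expand i hi j hj))]
    simp only [Finset.sum_add_distrib]
    have hdiag : ∑ i ∈ range N, ∑ j ∈ range N,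
        (if i = j then (2*(i:ℝ)+2) * (Z i * Z j) else 0)
        = ∑ i ∈ range N, ((2*(i:ℝ)+2) * (Z i * Z i)) := by
      refine Finset.sum_congr rfl (fun i hi => ?_)
      rw [Finset.sum_ite_eq (range N) i (fun j => (2*(i:ℝ)+2) * (Z i * Z j))]
      simp [hi]
    have hsup : ∑ i ∈ range N, ∑ j ∈ range N,
        (if i + 1 = j then -(((2*(i:ℝ)+3)/2) * (Z i * Z j)) else 0)
        = -∑ i ∈ range N, ((2*(i:ℝ)+3)/2) * (Z i * Z (i+1)) := by
      rw [← Finset.sum_neg_distrib]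
      refine Finset.sum_congr rfl (fun i hi => ?_)
      exact aux (fun k => -(((2*(i:ℝ)+3)/2) * (Z i * Z k))) (by simp [hZ]) i hi
    have hsub : ∑ i ∈ range N, ∑ j ∈ range N,
        (if j + 1 = i then -(((2*(j:ℝ)+3)/2) * (Z i * Z j)) else 0)
        = -∑ j ∈ range N, ((2*(j:ℝ)+3)/2) * (Z (j+1) * Z j) := by
      rw [Finset.sum_comm, ← Finset.sum_neg_distrib]
      refine Finset.sum_congr rfl (fun j hj => ?_)
      exact aux (fun k => -(((2*(j:ℝ)+3)/2) * (Z k * Z j))) (by simp [hZ]) j hj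
    rw [hdiag, hsup, hsub]; ring
  rw [key]
  -- now prove the arithmetic inequality
  have hcs : ∑ i ∈ range N, ((2*(i:ℝ)+3)/2) * (Z i * Z (i+1))
      + ∑ i ∈ range N, ((2*(i:ℝ)+3)/2) * (Z (i+1) * Z i)
      ≤ ∑ i ∈ range N, ((2*(i:ℝ)+3)/2) * (Z i ^ 2)
        + ∑ i ∈ range N, ((2*(i:ℝ)+3)/2) * (Z (i+1) ^ 2) := by
    rw [← Finset.sum_add_distrib, ← Finset.sum_add_distrib]
    refine Finset.sum_le_sum (fun i _ => ?_)
    have h0 : (0:ℝ) ≤ 2*(i:ℝ)+3 := by positivity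
    nlinarith [sq_nonneg (Z i - Z (i+1)), mul_nonneg h0 (sq_nonneg (Z i - Z (i+1)))]
  have hshift : ∑ i ∈ range N, ((2*(i:ℝ)+3)/2) * (Z (i+1) ^ 2)
      = ∑ i ∈ range N, ((2*(i:ℝ)+1)/2) * (Z i ^ 2) - ((1:ℝ)/2) * Z 0 ^ 2 := by
    have h1 : ∑ i ∈ range N, ((2*(i:ℝ)+3)/2) * (Z (i+1) ^ 2)
        = ∑ i ∈ range N, (fun k : ℕ => ((2*(k:ℝ)+1)/2) * (Z k ^ 2)) (i+1) := by
      refine Finset.sum_congr rfl (fun i _ => ?_)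
      push_cast; ring
    rw [h1]
    have h2 := Finset.sum_range_succ' (fun k : ℕ => ((2*(k:ℝ)+1)/2) * (Z k ^ 2)) N
    have h3 := Finset.sum_range_succ (fun k : ℕ => ((2*(k:ℝ)+1)/2) * (Z k ^ 2)) N
    rw [h3] at h2
    simp only [hZ] at h2
    push_cast at h2 ⊢
    linarith [h2]
  have hdiagbound : ∑ i ∈ range N, ((2*(i:ℝ)+3)/2) * (Z i ^ 2)
      + ∑ i ∈ range N, ((2*(i:ℝ)+1)/2) * (Z i ^ 2)
      = ∑ i ∈ range N, ((2*(i:ℝ)+2) * (Z i * Z i)) := by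
    rw [← Finset.sum_add_distrib]
    refine Finset.sum_congr rfl (fun i _ => ?_)
    ring
  nlinarith [sq_nonneg (Z 0)]

lemma hmesh_pos (N : ℕ) : 0 < hmesh N := by
  unfold hmesh; positivity

lemma gridx_pos {N : ℕ} (i : Fin N) : 0 < gridx N i := by
  unfold gridx
  have := hmesh_pos N
  positivity

lemma entry_eq {N : ℕ} (i j : Fin N) :
    gridx N i * matC N i j = (1 / hmesh N) * tau (i:ℕ) (j:ℕ) := by
  have hh : hmesh N ≠ 0 := (hmesh_pos N).ne'
  have hg : gridx N i ≠ 0 := (gridx_pos i).ne'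
  simp only [matC, Matrix.sub_apply, Matrix.diagonal_mul, matA, matB, tau]
  rcases eq_or_ne (i:ℕ) (j:ℕ) with hij | hij
  · have h1 : ¬ ((i:ℕ) + 1 = (j:ℕ)) := by omega
    have h2 : ¬ ((j:ℕ) + 1 = (i:ℕ)) := by omega
    simp only [hij, if_pos rfl, if_neg h1, if_neg h2, Nat.succ_ne_self, or_self, if_false, if_true]
    rw [show ((j:ℕ):ℝ) = ((i:ℕ):ℝ) by rw [hij]] -- harmless
    unfold gridx
    field_simp
    ring
  · rcases eq_or_ne ((i:ℕ) + 1) (j:ℕ) with h1 | h1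
    · have h2 : ¬ ((j:ℕ) + 1 = (i:ℕ)) := by omega
      have hcast : ((j:ℕ):ℝ) = ((i:ℕ):ℝ) + 1 := by exact_mod_cast h1.symm
      simp only [if_neg hij, if_pos h1, if_pos (Or.inl h1), if_neg h2]
      unfold gridx
      field_simp
      ring
    · rcases eq_or_ne ((j:ℕ) + 1) (i:ℕ) with h2 | h2
      · have hcast : ((i:ℕ):ℝ) = ((j:ℕ):ℝ) + 1 := by exact_mod_cast h2.symm
        simp only [if_neg hij, if_neg h1, if_pos (Or.inr h2), if_pos h2]
        unfold gridx
        rw [hcast]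
        field_simp
        ring
      · simp only [if_neg hij, if_neg h1, if_neg h2,
          if_neg (show ¬((i:ℕ)+1 = (j:ℕ) ∨ (j:ℕ)+1 = (i:ℕ)) from by omega)]
        simp

lemma gfun_nonneg {y : ℝ} (hy : |y| ≤ π / 2) : 0 ≤ gfun y := by
  have hpi := Real.pi_pos
  have hab := abs_le.1 hy
  unfold gfun
  split_ifs with h
  · norm_num
  rcases lt_or_gt_of_ne h with hneg | hpos
  · have h1 : Real.sin (2*y) ≤ 0 := by
      have h2 : (0:ℝ) ≤ Real.sin (-(2*y)) :=
        Real.sin_nonneg_of_nonneg_of_le_pi (by linarith) (by linarith [hab.1])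
      rw [Real.sin_neg] at h2; linarith
    exact div_nonneg_of_nonpos h1 (by linarith)
  · exact div_nonneg
      (Real.sin_nonneg_of_nonneg_of_le_pi (by linarith) (by linarith [hab.2]))
      (by linarith)


lemma quad_nonneg {N : ℕ} (u : Fin N → ℝ) (hu : ∀ i, |u i| ≤ π/2) (v : Fin N → ℝ) :
    0 ≤ v ⬝ᵥ ((matDpow N (1/2) * matC N * matDpow N (-(1/2)) + matG u * matDpow N (-2)) *ᵥ v) := by
  rw [add_mulVec, dotProduct_add]
  have hG : 0 ≤ v ⬝ᵥ ((matG u * matDpow N (-2)) *ᵥ v) := by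
    rw [matG, matDpow, diagonal_mul_diagonal]
    simp only [dotProduct, mulVec_diagonal]
    refine Finset.sum_nonneg fun i _ => ?_
    have h1 : 0 ≤ gfun (u i) := gfun_nonneg (hu i)
    have h2 : (0:ℝ) ≤ gridx N i ^ (-2:ℝ) := Real.rpow_nonneg (gridx_pos i).le _
    have h3 : 0 ≤ v i * v i := mul_self_nonneg _
    have h4 : v i * (gfun (u i) * gridx N i ^ (-2:ℝ) * v i)
        = (gfun (u i) * gridx N i ^ (-2:ℝ)) * (v i * v i) := by ring
    rw [h4]
    exact mul_nonneg (mul_nonneg h1 h2) h3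
  have hE : 0 ≤ v ⬝ᵥ ((matDpow N (1/2) * matC N * matDpow N (-(1/2))) *ᵥ v) := by
    set z : Fin N → ℝ := fun i => gridx N i ^ (-(1/2):ℝ) * v i with hzdef
    have hvs : ∀ i : Fin N, v i * gridx N i ^ ((1:ℝ)/2) = gridx N i * z i := by
      intro i
      have hp := gridx_pos (N := N) i
      have : gridx N i * gridx N i ^ (-(1/2):ℝ) = gridx N i ^ ((1:ℝ)/2) := by
        nth_rewrite 1 [← Real.rpow_one (gridx N i)]
        rw [← Real.rpow_add hp]
        norm_num
      rw [hzdef]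
      simp only []
      rw [← this]
      ring
    have hpt : ∀ i j : Fin N,
        v i * ((matDpow N (1/2) * matC N * matDpow N (-(1/2))) i j * v j)
          = (1/hmesh N) * (tau (i:ℕ) (j:ℕ) * z i * z j) := by
      intro i j
      rw [matDpow, matDpow, Matrix.mul_diagonal, Matrix.diagonal_mul]
      have h1 : v i * (gridx N i ^ ((1:ℝ)/2) * matC N i j * gridx N j ^ (-(1/2):ℝ) * v j)
          = (v i * gridx N i ^ ((1:ℝ)/2)) * matC N i j * (gridx N j ^ (-(1/2):ℝ) * v j) := by
        ring
      have h2 : (1:ℝ)/2 = ((1:ℝ)/2) := rfl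
      calc v i * (gridx N i ^ ((1:ℝ)/2) * matC N i j * gridx N j ^ (-(1/2):ℝ) * v j)
          = (v i * gridx N i ^ ((1:ℝ)/2)) * matC N i j * (gridx N j ^ (-(1/2):ℝ) * v j) := by ring
        _ = (gridx N i * z i) * matC N i j * z j := by rw [hvs i]
        _ = (gridx N i * matC N i j) * (z i * z j) := by ring
        _ = ((1/hmesh N) * tau (i:ℕ) (j:ℕ)) * (z i * z j) := by rw [entry_eq]
        _ = (1/hmesh N) * (tau (i:ℕ) (j:ℕ) * z i * z j) := by ring
    have hsum : v ⬝ᵥ ((matDpow N (1/2) * matC N * matDpow N (-(1/2))) *ᵥ v)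
        = (1/hmesh N) * ∑ i : Fin N, ∑ j : Fin N, tau (i:ℕ) (j:ℕ) * z i * z j := by
      simp only [dotProduct, Matrix.mulVec, Finset.mul_sum]
      exact Finset.sum_congr rfl fun i _ => Finset.sum_congr rfl fun j _ => hpt i j
    rw [hsum]
    have hZdef : ∀ n : ℕ, True := fun _ => trivial
    set Z : ℕ → ℝ := fun n => if h : n < N then z ⟨n, h⟩ else 0 with hZ
    have hZc : ∀ i : Fin N, Z (i:ℕ) = z i := by
      intro i; simp [hZ, i.isLt]
    have hZN : Z N = 0 := by simp [hZ]
    have hconv : ∑ i : Fin N, ∑ j : Fin N, tau (i:ℕ) (j:ℕ) * z i * z j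
        = ∑ i ∈ range N, ∑ j ∈ range N, tau i j * Z i * Z j := by
      rw [← Fin.sum_univ_eq_sum_range (fun n => ∑ j ∈ range N, tau n j * Z n * Z j) N]
      refine Finset.sum_congr rfl fun i _ => ?_
      rw [← Fin.sum_univ_eq_sum_range (fun m => tau (i:ℕ) m * Z (i:ℕ) * Z m) N]
      exact Finset.sum_congr rfl fun j _ => by rw [hZc i, hZc j]
    rw [hconv]
    have hhp := hmesh_pos N
    exact mul_nonneg (by positivity) (core N Z hZN)
  linarith

/-- For `‖u‖_∞ ≤ π/2` and `Δt > 0`, the matrix `I + Δt(D^{1/2} C D^{−1/2} + G(u)D⁻²)`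
is invertible and the Euclidean operator norm of its inverse is at most 1. -/
theorem stmt9 {N : ℕ} (hN : 1 ≤ N) (u : Fin N → ℝ) (hu : ‖u‖ ≤ π / 2)
    (Δt : ℝ) (hΔt : 0 < Δt) :
    IsUnit (1 + Δt • (matDpow N (1 / 2) * matC N * matDpow N (-(1 / 2)) + matG u * matDpow N (-2))) ∧
      opNorm2 (1 + Δt • (matDpow N (1 / 2) * matC N * matDpow N (-(1 / 2)) + matG u * matDpow N (-2)))⁻¹ ≤ 1 := by
  set K := matDpow N (1 / 2) * matC N * matDpow N (-(1 / 2)) + matG u * matDpow N (-2) with hK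
  set M := (1 : Matrix (Fin N) (Fin N) ℝ) + Δt • K with hM
  have hquad : ∀ v : Fin N → ℝ, 0 ≤ v ⬝ᵥ (K *ᵥ v) := by
    intro v
    refine quad_nonneg u (fun i => ?_) v
    have h1 := norm_le_pi_norm u i
    have h2 : ‖u i‖ = |u i| := Real.norm_eq_abs _
    linarith [h1.trans hu, abs_nonneg (u i), h2 ▸ (h1.trans hu)]
  have hlow : ∀ w : Fin N → ℝ,
      ‖(WithLp.equiv 2 (Fin N → ℝ)).symm w‖ ≤ ‖(WithLp.equiv 2 (Fin N → ℝ)).symm (M *ᵥ w)‖ := by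
    intro w
    set x : EuclideanSpace ℝ (Fin N) := (WithLp.equiv 2 (Fin N → ℝ)).symm w with hx
    set y : EuclideanSpace ℝ (Fin N) := (WithLp.equiv 2 (Fin N → ℝ)).symm (M *ᵥ w) with hy
    have hin : inner ℝ x y = w ⬝ᵥ (M *ᵥ w) := by
      simp only [hx, hy, PiLp.inner_apply, RCLike.inner_apply, conj_trivial,
        WithLp.equiv_symm_apply, PiLp.toLp_apply, WithLp.ofLp_toLp, dotProduct]
      exact Finset.sum_congr rfl fun i _ => mul_comm _ _
    have hMw : w ⬝ᵥ (M *ᵥ w) = w ⬝ᵥ w + Δt * (w ⬝ᵥ (K *ᵥ w)) := by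
      rw [hM, Matrix.add_mulVec, Matrix.one_mulVec, smul_mulVec,
        dotProduct_add, dotProduct_smul, smul_eq_mul]
    have hww : w ⬝ᵥ w = ‖x‖ ^ 2 := by
      rw [← real_inner_self_eq_norm_sq x]
      simp only [hx, PiLp.inner_apply, RCLike.inner_apply, conj_trivial,
        WithLp.equiv_symm_apply, PiLp.toLp_apply, WithLp.ofLp_toLp, dotProduct]
    have h1 : ‖x‖ ^ 2 ≤ inner ℝ x y := by
      rw [hin, hMw, hww]
      nlinarith [hquad w, hΔt.le]
    have h2 : inner ℝ x y ≤ ‖x‖ * ‖y‖ := real_inner_le_norm x y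
    rcases eq_or_lt_of_le (norm_nonneg x) with h0 | h0
    · rw [← h0]; exact norm_nonneg y
    · have h3 : ‖x‖ * ‖x‖ ≤ ‖x‖ * ‖y‖ := by nlinarith
      exact le_of_mul_le_mul_left h3 h0
  have hker : ∀ w : Fin N → ℝ, M *ᵥ w = 0 → w = 0 := by
    intro w hw
    have h1 := hlow w
    rw [hw] at h1
    have h2 : (WithLp.equiv 2 (Fin N → ℝ)).symm (0 : Fin N → ℝ) = (0 : EuclideanSpace ℝ (Fin N)) := rfl
    rw [h2, norm_zero] at h1
    have h3 : (WithLp.equiv 2 (Fin N → ℝ)).symm w = 0 :=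
      norm_le_zero_iff.mp h1
    have h4 := congrArg (WithLp.equiv 2 (Fin N → ℝ)) h3
    simpa using h4
  have hinj : Function.Injective M.mulVec := by
    intro a b hab
    have h1 : M *ᵥ (a - b) = 0 := by
      rw [Matrix.mulVec_sub, hab, sub_self]
    have := hker (a - b) h1
    exact sub_eq_zero.mp this
  have hUnit : IsUnit M := Matrix.mulVec_injective_iff_isUnit.mp hinj
  have hdet : IsUnit M.det := (Matrix.isUnit_iff_isUnit_det M).mp hUnit
  refine ⟨hUnit, ?_⟩
  unfold opNorm2
  refine ContinuousLinearMap.opNorm_le_bound _ zero_le_one (fun y => ?_)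
  rw [one_mul]
  have hTy : (LinearMap.toContinuousLinearMap (Matrix.toEuclideanLin M⁻¹) :
      EuclideanSpace ℝ (Fin N) →L[ℝ] EuclideanSpace ℝ (Fin N)) y
      = (WithLp.equiv 2 (Fin N → ℝ)).symm (M⁻¹ *ᵥ (WithLp.equiv 2 (Fin N → ℝ) y)) := rfl
  rw [hTy]
  have hMy : M *ᵥ (M⁻¹ *ᵥ (WithLp.equiv 2 (Fin N → ℝ) y)) = WithLp.equiv 2 (Fin N → ℝ) y := by
    rw [Matrix.mulVec_mulVec, Matrix.mul_nonsing_inv M hdet, Matrix.one_mulVec]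
  have h1 := hlow (M⁻¹ *ᵥ (WithLp.equiv 2 (Fin N → ℝ) y))
  rw [hMy] at h1
  simpa using h1
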